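/- Let p ∈ [1,∞] and let f ∈ L^p(ℝ) be a measurable function such that for some real numbers a < b one has f(x) ≤ 0 for almost every x ∈ [a,b] and f(x) ≥ 0 for almost every x ∉ [a,b]. Define F(x) = ∫_ℝ K(x−y) f(y) dy. Then F(b) ≥ F(a); moreover F(b) = F(a) holds only when f(x) = 0 for almost every x ∈ ℝ. -/

import Mathlib

open MeasureTheory Real Set
open scoped ENNReal NNReal

/-- The kernel `K(x) = -sgn(x) e^{-|x|}/2`, the derivative of the Green's function
`G₂(x) = e^{-|x|}/2` of `1 - d²/dx²` on `ℝ`. -/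
noncomputable def bbmK (x : ℝ) : ℝ := -Real.sign x * Real.exp (-|x|) / 2

lemma bbmK_zero : bbmK 0 = 0 := by simp [bbmK, Real.sign_zero]

lemma bbmK_of_pos {x : ℝ} (hx : 0 < x) : bbmK x = -Real.exp (-x) / 2 := by
  rw [bbmK, Real.sign_of_pos hx, abs_of_pos hx]; ring_nf

lemma bbmK_of_neg {x : ℝ} (hx : x < 0) : bbmK x = Real.exp x / 2 := by
  rw [bbmK, Real.sign_of_neg hx, abs_of_neg hx]; ring_nf

lemma bbmK_neg_of_pos {x : ℝ} (hx : 0 < x) : bbmK x < 0 := by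
  rw [bbmK_of_pos hx]
  have := Real.exp_pos (-x)
  linarith

lemma bbmK_pos_of_neg {x : ℝ} (hx : x < 0) : 0 < bbmK x := by
  rw [bbmK_of_neg hx]
  have := Real.exp_pos x
  linarith

lemma abs_bbmK_le (x : ℝ) : |bbmK x| ≤ Real.exp (-|x|) := by
  rcases lt_trichotomy x 0 with h | h | h
  · rw [bbmK_of_neg h, abs_of_neg h, neg_neg]
    have h1 := Real.exp_pos x
    rw [abs_of_pos (by positivity)]
    linarith
  · simp [h, bbmK_zero]
  · rw [bbmK_of_pos h, abs_of_pos h]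
    have h1 := Real.exp_pos (-x)
    rw [abs_of_neg (by linarith : -Real.exp (-x) / 2 < 0), neg_div, neg_neg]
    linarith

lemma abs_bbmK_le_one (x : ℝ) : |bbmK x| ≤ 1 :=
  (abs_bbmK_le x).trans (Real.exp_le_one_iff.mpr (neg_nonpos.mpr (abs_nonneg x)))

lemma measurable_sign' : Measurable Real.sign := by
  have h : Real.sign = fun r : ℝ => if r < 0 then (-1 : ℝ) else if 0 < r then 1 else 0 := rfl
  rw [h]
  exact Measurable.ite (measurableSet_lt measurable_id measurable_const) measurable_const
    (Measurable.ite (measurableSet_lt measurable_const measurable_id) measurable_const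
      measurable_const)

lemma measurable_bbmK : Measurable bbmK := by
  apply Measurable.div_const
  exact measurable_sign'.neg.mul (Real.continuous_exp.comp continuous_abs.neg).measurable

lemma integrable_exp_neg_abs' : Integrable (fun y : ℝ => Real.exp (-|y|)) := by
  have h1 : IntegrableOn (fun y : ℝ => Real.exp (-|y|)) (Set.Ioi 0) := by
    have h := exp_neg_integrableOn_Ioi 0 (b := 1) one_pos
    refine h.congr_fun (fun y hy => ?_) measurableSet_Ioi
    rw [abs_of_pos hy]; ring_nf
  have h2 : IntegrableOn (fun y : ℝ => Real.exp (-|y|)) (Set.Iic 0) := by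
    have m : MeasurableEmbedding fun x : ℝ => -x :=
      (Homeomorph.neg ℝ).measurableEmbedding
    rw [← Measure.map_neg_eq_self (volume : Measure ℝ), m.integrableOn_map_iff]
    simp_rw [Function.comp_def, abs_neg, neg_preimage, neg_Iic, neg_zero]
    rw [integrableOn_Ici_iff_integrableOn_Ioi]
    exact h1
  have h := h2.union h1
  rwa [Set.Iic_union_Ioi, integrableOn_univ] at h

lemma integrable_bbmK_sub (x : ℝ) : Integrable (fun y => bbmK (x - y)) := by
  have hexp := integrable_exp_neg_abs'.comp_sub_left x
  refine hexp.mono' ?_ (ae_of_all _ fun y => ?_)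
  · exact (measurable_bbmK.comp (measurable_const.sub measurable_id)).aestronglyMeasurable
  · simpa [Real.norm_eq_abs] using abs_bbmK_le (x - y)

lemma memℒp_bbmK_sub (x : ℝ) (q : ℝ≥0∞) (hq : 1 ≤ q) :
    MemLp (fun y => bbmK (x - y)) q (volume : Measure ℝ) := by
  have hm : AEStronglyMeasurable (fun y => bbmK (x - y)) (volume : Measure ℝ) :=
    (measurable_bbmK.comp (measurable_const.sub measurable_id)).aestronglyMeasurable
  by_cases hq' : q = ∞
  · subst hq'
    exact memLp_top_of_bound hm 1
      (ae_of_all _ fun y => by simpa [Real.norm_eq_abs] using abs_bbmK_le_one (x - y))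
  · refine ⟨hm, ?_⟩
    rw [eLpNorm_eq_lintegral_rpow_enorm_toReal (zero_lt_one.trans_le hq).ne' hq']
    refine ENNReal.rpow_lt_top_of_nonneg (by positivity) ?_
    have ht : 1 ≤ q.toReal := by
      simpa using ENNReal.toReal_mono hq' hq
    have hb : (∫⁻ y, (‖bbmK (x - y)‖₊ : ℝ≥0∞) ^ q.toReal) ≤
        ∫⁻ y, (‖bbmK (x - y)‖₊ : ℝ≥0∞) := by
      refine lintegral_mono fun y => ?_
      refine ENNReal.rpow_le_self_of_le_one ?_ ht
      refine ENNReal.coe_le_one_iff.mpr ?_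
      have h1 : ‖bbmK (x - y)‖ ≤ 1 := by
        simpa [Real.norm_eq_abs] using abs_bbmK_le_one (x - y)
      exact_mod_cast h1
    exact (lt_of_le_of_lt hb (integrable_bbmK_sub x).2).ne

/-- If `f ∈ L^p(ℝ)`, `f ≤ 0` a.e. on `[a,b]` and `f ≥ 0` a.e. outside `[a,b]`, then
`F(x) = ∫ K(x-y) f(y) dy` satisfies `F(b) ≥ F(a)`, with equality only if `f = 0` a.e. -/
theorem bbm_key_lemma_line (p : ℝ≥0∞) (hp : 1 ≤ p) (f : ℝ → ℝ)
    (hf : MemLp f p (volume : Measure ℝ))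
    (a b : ℝ) (hab : a < b)
    (hneg : ∀ᵐ x : ℝ, x ∈ Set.Icc a b → f x ≤ 0)
    (hpos : ∀ᵐ x : ℝ, x ∉ Set.Icc a b → 0 ≤ f x) :
    (∫ y : ℝ, bbmK (a - y) * f y) ≤ (∫ y : ℝ, bbmK (b - y) * f y) ∧
    ((∫ y : ℝ, bbmK (b - y) * f y) = (∫ y : ℝ, bbmK (a - y) * f y) →
      ∀ᵐ x : ℝ, f x = 0) := by
  -- Hölder: the products are integrable
  have key : ∀ x : ℝ, Integrable (fun y => bbmK (x - y) * f y) := by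
    intro x
    set q : ℝ≥0∞ := (1 - 1/p)⁻¹ with hqdef
    have hp1 : 1/p ≤ 1 := by rw [one_div]; exact ENNReal.inv_le_one.mpr hp
    have hq1 : 1 ≤ q := by
      rw [hqdef]
      exact ENNReal.one_le_inv.mpr tsub_le_self
    have hpq : (1 : ℝ≥0∞)/1 = 1/q + 1/p := by
      rw [hqdef, one_div ((1 - 1/p)⁻¹), inv_inv, tsub_add_cancel_of_le hp1]
      simp
    have h := hf.smul (memℒp_bbmK_sub x q hq1) (r := 1) (hpqr := ⟨by simpa [one_div] using hpq.symm⟩)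
    rw [memLp_one_iff_integrable] at h
    simpa [smul_eq_mul, mul_comm, Pi.mul_def] using h
  have Ia := key a
  have Ib := key b
  -- sign of the kernel difference
  have hg_neg : ∀ y ∈ Set.Icc a b, bbmK (b - y) - bbmK (a - y) < 0 := by
    rintro y ⟨hay, hyb⟩
    rcases lt_or_eq_of_le hyb with h | h
    · have h2 : bbmK (b - y) < 0 := bbmK_neg_of_pos (by linarith)
      have h1 : 0 ≤ bbmK (a - y) := by
        rcases lt_or_eq_of_le hay with h' | h'
        · exact (bbmK_pos_of_neg (by linarith)).le
        · rw [← h', sub_self, bbmK_zero]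
      linarith
    · have h1 : 0 < bbmK (a - y) := bbmK_pos_of_neg (by rw [h]; linarith)
      have h2 : bbmK (b - y) = 0 := by rw [h, sub_self, bbmK_zero]
      linarith
  have hg_pos : ∀ y, y ∉ Set.Icc a b → 0 < bbmK (b - y) - bbmK (a - y) := by
    intro y hy
    rw [Set.mem_Icc, not_and_or, not_le, not_le] at hy
    rcases hy with h | h
    · rw [bbmK_of_pos (by linarith : (0:ℝ) < b - y),
        bbmK_of_pos (by linarith : (0:ℝ) < a - y)]
      have : Real.exp (-(b - y)) < Real.exp (-(a - y)) := Real.exp_lt_exp.mpr (by linarith)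
      linarith
    · rw [bbmK_of_neg (by linarith : b - y < 0), bbmK_of_neg (by linarith : a - y < 0)]
      have : Real.exp (a - y) < Real.exp (b - y) := Real.exp_lt_exp.mpr (by linarith)
      linarith
  -- the difference of integrands is a.e. nonnegative
  have hdiff_nonneg : (0 : ℝ → ℝ) ≤ᵐ[volume]
      fun y => bbmK (b - y) * f y - bbmK (a - y) * f y := by
    filter_upwards [hneg, hpos] with y h1 h2
    simp only [Pi.zero_apply]
    by_cases hy : y ∈ Set.Icc a b
    · have h3 : 0 ≤ (-(bbmK (b - y) - bbmK (a - y))) * (-(f y)) :=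
        mul_nonneg (neg_nonneg.mpr (hg_neg y hy).le) (neg_nonneg.mpr (h1 hy))
      nlinarith [h3]
    · have h3 : 0 ≤ (bbmK (b - y) - bbmK (a - y)) * f y :=
        mul_nonneg (hg_pos y hy).le (h2 hy)
      nlinarith [h3]
  have hint : Integrable (fun y => bbmK (b - y) * f y - bbmK (a - y) * f y) := Ib.sub Ia
  have hle : (∫ y : ℝ, bbmK (a - y) * f y) ≤ ∫ y : ℝ, bbmK (b - y) * f y := by
    have h0 : 0 ≤ ∫ y : ℝ, (bbmK (b - y) * f y - bbmK (a - y) * f y) :=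
      integral_nonneg_of_ae hdiff_nonneg
    rw [integral_sub Ib Ia] at h0
    linarith
  refine ⟨hle, fun heq => ?_⟩
  have h0 : (∫ y : ℝ, (bbmK (b - y) * f y - bbmK (a - y) * f y)) = 0 := by
    rw [integral_sub Ib Ia, heq, sub_self]
  have hzero := (integral_eq_zero_iff_of_nonneg_ae hdiff_nonneg hint).mp h0
  filter_upwards [hzero] with y hy
  have hne : bbmK (b - y) - bbmK (a - y) ≠ 0 := by
    by_cases h : y ∈ Set.Icc a b
    · exact (hg_neg y h).ne
    · exact (hg_pos y h).ne'
  have hmul : (bbmK (b - y) - bbmK (a - y)) * f y = 0 := by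
    have : bbmK (b - y) * f y - bbmK (a - y) * f y = 0 := hy
    linarith [this, sub_mul (bbmK (b - y)) (bbmK (a - y)) (f y)]
  rcases mul_eq_zero.mp hmul with h | h
  · exact absurd h hne
  · exact h
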